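/- Let n₁, n₂, m, k be natural numbers. Let G₁ be an n₁×m and G₂ an n₂×m complex matrix, let Q₁ (n₁×k) and Q₂ (n₂×k) be complex matrices with Q₁ᴴ Q₁ = I and Q₂ᴴ Q₂ = I, and let E₁, E₂ be k×k complex matrices. Define the stacked matrices G := fromRows G₁ G₂ (of size (n₁+n₂)×m), Q := fromRows (Q₁ E₁) (Q₂ E₂) (of size (n₁+n₂)×k), Ĝ := fromRows (Q₁ᴴ G₁) (Q₂ᴴ G₂) (of size 2k×m), and Q̂ := fromRows E₁ E₂ (of size 2k×k). Then ‖G − Q Qᴴ G‖_F² = ‖G₁ − Q₁ Q₁ᴴ G₁‖_F² + ‖G₂ − Q₂ Q₂ᴴ G₂‖_F² + ‖Ĝ − Q̂ Q̂ᴴ Ĝ‖_F². -/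

import Mathlib

open Matrix

/-- The Frobenius norm of a complex matrix. -/
noncomputable def frobNorm {α β : Type*} [Fintype α] [Fintype β] (A : Matrix α β ℂ) : ℝ :=
  Real.sqrt (∑ i, ∑ j, ‖A i j‖ ^ 2)

noncomputable def frobSq {α β : Type*} [Fintype α] [Fintype β] (A : Matrix α β ℂ) : ℝ :=
  ∑ i, ∑ j, ‖A i j‖ ^ 2

lemma frobNorm_sq {α β : Type*} [Fintype α] [Fintype β] (A : Matrix α β ℂ) :
    frobNorm A ^ 2 = frobSq A := Real.sq_sqrt (by positivity)

lemma frobSq_eq_trace {α β : Type*} [Fintype α] [Fintype β] (A : Matrix α β ℂ) :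
    frobSq A = (Matrix.trace (Aᴴ * A)).re := by
  simp only [frobSq, Matrix.trace, Matrix.diag, Matrix.mul_apply,
    Matrix.conjTranspose_apply, Complex.re_sum]
  rw [Finset.sum_comm]
  congr 1; ext i; congr 1; ext j
  rw [← Complex.normSq_eq_norm_sq,
    show star (A j i) = (starRingEnd ℂ) (A j i) from rfl, ← Complex.normSq_eq_conj_mul_self]
  simp

lemma frobSq_mul_isometry {n k m : ℕ} (Q : Matrix (Fin n) (Fin k) ℂ) (hQ : Qᴴ * Q = 1)
    (B : Matrix (Fin k) (Fin m) ℂ) : frobSq (Q * B) = frobSq B := by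
  rw [frobSq_eq_trace, frobSq_eq_trace, conjTranspose_mul, Matrix.mul_assoc,
    ← Matrix.mul_assoc Qᴴ, hQ, Matrix.one_mul]

lemma frobSq_add_orth {n m : ℕ} (A B : Matrix (Fin n) (Fin m) ℂ) (h : Aᴴ * B = 0) :
    frobSq (A + B) = frobSq A + frobSq B := by
  have h' : Bᴴ * A = 0 := by
    have := congrArg Matrix.conjTranspose h
    simpa [conjTranspose_mul] using this
  rw [frobSq_eq_trace, frobSq_eq_trace, frobSq_eq_trace]
  simp [conjTranspose_add, Matrix.add_mul, Matrix.mul_add, h, h']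

lemma frobSq_fromRows {n₁ n₂ m : ℕ} (A : Matrix (Fin n₁) (Fin m) ℂ)
    (B : Matrix (Fin n₂) (Fin m) ℂ) :
    frobSq (Matrix.fromRows A B) = frobSq A + frobSq B := by
  simp [frobSq, Fintype.sum_sum_type, Matrix.fromRows_apply_inl, Matrix.fromRows_apply_inr]

lemma fromRows_sub {n₁ n₂ m : ℕ} (A C : Matrix (Fin n₁) (Fin m) ℂ)
    (B D : Matrix (Fin n₂) (Fin m) ℂ) :
    Matrix.fromRows A B - Matrix.fromRows C D = Matrix.fromRows (A - C) (B - D) := by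
  ext (i | i) j <;> simp [Matrix.fromRows_apply_inl, Matrix.fromRows_apply_inr]

lemma resid_orth {n k m m' : ℕ} (Q : Matrix (Fin n) (Fin k) ℂ) (hQ : Qᴴ * Q = 1)
    (G : Matrix (Fin n) (Fin m) ℂ) (X : Matrix (Fin k) (Fin m') ℂ) :
    (G - Q * Qᴴ * G)ᴴ * (Q * X) = 0 := by
  have h0 : (G - Q * Qᴴ * G)ᴴ * Q = 0 := by
    simp [conjTranspose_sub, conjTranspose_mul, Matrix.sub_mul, Matrix.mul_assoc, hQ]
  rw [← Matrix.mul_assoc, h0, Matrix.zero_mul]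

lemma block_decomp {n k m : ℕ} (Q : Matrix (Fin n) (Fin k) ℂ) (hQ : Qᴴ * Q = 1)
    (G : Matrix (Fin n) (Fin m) ℂ) (E : Matrix (Fin k) (Fin k) ℂ)
    (W : Matrix (Fin k) (Fin m) ℂ) :
    frobSq (G - Q * (E * W)) = frobSq (G - Q * Qᴴ * G) + frobSq (Qᴴ * G - E * W) := by
  have hsplit : G - Q * (E * W)
      = (G - Q * Qᴴ * G) + Q * (Qᴴ * G - E * W) := by
    rw [Matrix.mul_sub]
    simp [Matrix.mul_assoc]
  rw [hsplit, frobSq_add_orth _ _ (resid_orth Q hQ G _), frobSq_mul_isometry Q hQ]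

/-- Identity (eq:error_nonleaf): exact Pythagoras decomposition of the
approximation error of a nested directional cluster basis for a cluster with
two sons into the sons' errors plus the error of the condensed matrix `Ghat`. -/
theorem nested_basis_error_decomposition (n₁ n₂ m k : ℕ)
    (G₁ : Matrix (Fin n₁) (Fin m) ℂ) (G₂ : Matrix (Fin n₂) (Fin m) ℂ)
    (Q₁ : Matrix (Fin n₁) (Fin k) ℂ) (Q₂ : Matrix (Fin n₂) (Fin k) ℂ)
    (E₁ E₂ : Matrix (Fin k) (Fin k) ℂ)
    (hQ₁ : Q₁ᴴ * Q₁ = 1) (hQ₂ : Q₂ᴴ * Q₂ = 1) :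
    let G := Matrix.fromRows G₁ G₂
    let Q := Matrix.fromRows (Q₁ * E₁) (Q₂ * E₂)
    let Ghat := Matrix.fromRows (Q₁ᴴ * G₁) (Q₂ᴴ * G₂)
    let Qhat := Matrix.fromRows E₁ E₂
    frobNorm (G - Q * Qᴴ * G) ^ 2
      = frobNorm (G₁ - Q₁ * Q₁ᴴ * G₁) ^ 2 + frobNorm (G₂ - Q₂ * Q₂ᴴ * G₂) ^ 2
        + frobNorm (Ghat - Qhat * Qhatᴴ * Ghat) ^ 2 := by
  intro G Q Ghat Qhat
  set W : Matrix (Fin k) (Fin m) ℂ := E₁ᴴ * (Q₁ᴴ * G₁) + E₂ᴴ * (Q₂ᴴ * G₂) with hW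
  have hQG : Qᴴ * G = W := by
    show (Matrix.fromRows (Q₁ * E₁) (Q₂ * E₂))ᴴ * Matrix.fromRows G₁ G₂ = W
    rw [Matrix.conjTranspose_fromRows_eq_fromCols_conjTranspose, Matrix.fromCols_mul_fromRows]
    simp [hW, conjTranspose_mul, Matrix.mul_assoc]
  have hQhatGhat : Qhatᴴ * Ghat = W := by
    show (Matrix.fromRows E₁ E₂)ᴴ * Matrix.fromRows (Q₁ᴴ * G₁) (Q₂ᴴ * G₂) = W
    rw [Matrix.conjTranspose_fromRows_eq_fromCols_conjTranspose, Matrix.fromCols_mul_fromRows]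
  have hLHS : G - Q * Qᴴ * G
      = Matrix.fromRows (G₁ - Q₁ * (E₁ * W)) (G₂ - Q₂ * (E₂ * W)) := by
    rw [Matrix.mul_assoc, hQG]
    show Matrix.fromRows G₁ G₂ - Matrix.fromRows (Q₁ * E₁) (Q₂ * E₂) * W = _
    rw [Matrix.fromRows_mul, fromRows_sub, Matrix.mul_assoc, Matrix.mul_assoc]
  have hRHS : Ghat - Qhat * Qhatᴴ * Ghat
      = Matrix.fromRows (Q₁ᴴ * G₁ - E₁ * W) (Q₂ᴴ * G₂ - E₂ * W) := by
    rw [Matrix.mul_assoc, hQhatGhat]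
    show Matrix.fromRows (Q₁ᴴ * G₁) (Q₂ᴴ * G₂) - Matrix.fromRows E₁ E₂ * W = _
    rw [Matrix.fromRows_mul, fromRows_sub]
  rw [frobNorm_sq, frobNorm_sq, frobNorm_sq, frobNorm_sq, hLHS, hRHS,
    frobSq_fromRows, frobSq_fromRows, block_decomp Q₁ hQ₁ G₁ E₁ W,
    block_decomp Q₂ hQ₂ G₂ E₂ W]
  ring
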